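/- Let $p>1$ and let $\psi:(0,\infty)\to[0,\infty)$ be nonincreasing with $\int_0^\infty\psi^p<\infty$. Then $\int_0^\infty\left(\frac{1}{x}\int_0^x\psi(y)\,dy\right)^p dx \ge \frac{p}{p-1}\int_0^\infty \psi(y)^p\,dy$. -/

import Mathlib

open MeasureTheory Set ENNReal

lemma auxRH_rpow_ne_top {x : ℝ≥0∞} (h0 : x ≠ 0) (ht : x ≠ ⊤) (y : ℝ) : x ^ y ≠ ⊤ := by
  simp [ENNReal.rpow_eq_top_iff, h0, ht]

lemma auxRH_rpow_Ioo (q : ℝ) (hq : 0 < q) (b : ℝ) (hb : 0 ≤ b) :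
    ∫⁻ t in Ioo (0:ℝ) b, ENNReal.ofReal t ^ (q-1) = ENNReal.ofReal (b ^ q / q) := by
  have h1 : ∫⁻ t in Ioo (0:ℝ) b, ENNReal.ofReal t ^ (q-1)
      = ∫⁻ t in Ioo (0:ℝ) b, ENNReal.ofReal (t ^ (q-1)) := by
    refine setLIntegral_congr_fun measurableSet_Ioo (fun t ht => ?_)
    rw [ENNReal.ofReal_rpow_of_pos ht.1]
  rw [h1, ← ofReal_integral_eq_lintegral_ofReal]
  · congr 1
    rw [← MeasureTheory.integral_Ioc_eq_integral_Ioo, ← intervalIntegral.integral_of_le hb,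
      integral_rpow (Or.inl (by linarith))]
    rw [sub_add_cancel, Real.zero_rpow hq.ne', sub_zero]
  · exact (intervalIntegral.intervalIntegrable_rpow' (by linarith)).1.mono_set
      Ioo_subset_Ioc_self
  · exact (ae_restrict_iff' measurableSet_Ioo).2 (ae_of_all _ fun t ht => Real.rpow_nonneg ht.1.le _)

lemma auxRH_rpow_Ioi (p : ℝ) (hp : 1 < p) (y : ℝ) (hy : 0 < y) :
    ∫⁻ x in Ioi y, ENNReal.ofReal x ^ (-p) = ENNReal.ofReal (y ^ (1-p) / (p-1)) := by
  have h1 : ∫⁻ x in Ioi y, ENNReal.ofReal x ^ (-p)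
      = ∫⁻ x in Ioi y, ENNReal.ofReal (x ^ (-p)) := by
    refine setLIntegral_congr_fun measurableSet_Ioi (fun x hx => ?_)
    rw [ENNReal.ofReal_rpow_of_pos (hy.trans hx)]
  rw [h1, ← ofReal_integral_eq_lintegral_ofReal]
  · rw [integral_Ioi_rpow_of_lt (by linarith) hy]
    congr 1
    rw [neg_div, ← div_neg, neg_add']
    ring_nf
  · exact integrableOn_Ioi_rpow_of_lt (by linarith) hy
  · exact (ae_restrict_iff' measurableSet_Ioi).2 (ae_of_all _ fun x hx =>
      Real.rpow_nonneg (hy.trans hx).le _)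

lemma auxRH_tint (p : ℝ) (hp : 1 < p) (T : ℝ) (hT : 0 ≤ T) :
    ∫⁻ t in Ioo (0:ℝ) T, ENNReal.ofReal t ^ (p-2) * (ENNReal.ofReal T - ENNReal.ofReal t)
      = ENNReal.ofReal (T ^ p / (p * (p-1))) := by
  have hint : IntegrableOn (fun t : ℝ => T * t ^ (p-2) - t ^ (p-1)) (Ioo 0 T) := by
    refine Integrable.sub ?_ ?_
    · exact ((intervalIntegral.intervalIntegrable_rpow' (by linarith)).1.mono_set
        Ioo_subset_Ioc_self).const_mul T
    · exact (intervalIntegral.intervalIntegrable_rpow' (by linarith)).1.mono_set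
        Ioo_subset_Ioc_self
  have h1 : ∫⁻ t in Ioo (0:ℝ) T, ENNReal.ofReal t ^ (p-2) * (ENNReal.ofReal T - ENNReal.ofReal t)
      = ∫⁻ t in Ioo (0:ℝ) T, ENNReal.ofReal (T * t ^ (p-2) - t ^ (p-1)) := by
    refine setLIntegral_congr_fun measurableSet_Ioo (fun t ht => ?_)
    rw [ENNReal.ofReal_rpow_of_pos ht.1, ← ENNReal.ofReal_sub _ ht.1.le,
      ← ENNReal.ofReal_mul (Real.rpow_nonneg ht.1.le _)]
    congr 1
    rw [mul_sub, mul_comm (t ^ (p-2)) T, ← Real.rpow_add_one ht.1.ne']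
    ring_nf
  rw [h1, ← ofReal_integral_eq_lintegral_ofReal hint]
  · congr 1
    rw [← MeasureTheory.integral_Ioc_eq_integral_Ioo, ← intervalIntegral.integral_of_le hT,
      intervalIntegral.integral_sub, intervalIntegral.integral_const_mul,
      integral_rpow (Or.inl (by linarith)), integral_rpow (Or.inl (by linarith))]
    · rw [sub_add_cancel, show p - 2 + 1 = p - 1 by ring,
        Real.zero_rpow (show p - 1 ≠ 0 by linarith), Real.zero_rpow (show p ≠ 0 by linarith)]
      have hTp : T * T ^ (p-1) = T ^ p := by
        nth_rewrite 1 [← Real.rpow_one T]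
        rw [← Real.rpow_add' hT (by linarith), show 1 + (p-1) = p by ring]
      rw [sub_zero, sub_zero, mul_div_assoc' T, hTp]
      have hp0 : p ≠ 0 := by linarith
      have hp1 : p - 1 ≠ 0 := by linarith
      field_simp
      ring
    · exact ((intervalIntegral.intervalIntegrable_rpow' (by linarith))).const_mul T
    · exact intervalIntegral.intervalIntegrable_rpow' (by linarith)
  · refine (ae_restrict_iff' measurableSet_Ioo).2 (ae_of_all _ fun t ht => ?_)
    have h2 : t ^ (p-1) ≤ T * t ^ (p-2) := by
      have h3 : t ^ (p-1) = t ^ (p-2) * t := by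
        rw [show p-1 = p-2+1 by ring, Real.rpow_add_one ht.1.ne']
      rw [h3, mul_comm (t ^ (p-2)) t]
      exact mul_le_mul_of_nonneg_right ht.2.le (Real.rpow_nonneg ht.1.le _)
    show (0:ℝ) ≤ T * t ^ (p-2) - t ^ (p-1)
    linarith

/-- Continuous reverse Hardy inequality (Renaud; Lyon–Ward). -/
theorem integral_reverse_hardy (p : ℝ) (hp : 1 < p) (ψ : ℝ → ℝ≥0∞)
    (hψ : Measurable ψ) (hmono : AntitoneOn ψ (Ioi 0))
    (hfin : ∫⁻ y in Ioi (0 : ℝ), ψ y ^ p < ⊤) :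
    ENNReal.ofReal (p / (p - 1)) * ∫⁻ y in Ioi (0 : ℝ), ψ y ^ p
      ≤ ∫⁻ x in Ioi (0 : ℝ),
          ((∫⁻ y in Ioc (0 : ℝ) x, ψ y) / ENNReal.ofReal x) ^ p := by
  classical
  have hp0 : (0:ℝ) < p := by linarith
  set C := ∫⁻ y in Ioi (0:ℝ), ψ y ^ p with hCdef
  set F : ℝ → ℝ≥0∞ := fun x => ∫⁻ y in Ioc (0:ℝ) x, ψ y with hFdef
  have hFeq : ∀ x : ℝ, (∫⁻ y in Ioc (0:ℝ) x, ψ y) = F x := fun x => by rw [hFdef]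
  simp only [hFeq]
  set μ : Measure ℝ := volume.withDensity ψ with hμdef
  have hμapp : ∀ s : Set ℝ, MeasurableSet s → μ s = ∫⁻ y in s, ψ y :=
    fun s hs => withDensity_apply ψ hs
  have hFμ : ∀ a : ℝ, F a = μ (Ioc 0 a) := fun a => by
    rw [hμapp _ measurableSet_Ioc]
  have hμz : ∀ a : ℝ, μ {a} = 0 :=
    fun a => (withDensity_absolutelyContinuous volume ψ) (measure_singleton a)
  have hFmono : Monotone F := fun a b hab => lintegral_mono_set (Ioc_subset_Ioc_right hab)
  have hFmeas : Measurable F := hFmono.measurable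
  have hF0 : F 0 = 0 := by simp [hFdef]
  have hFneg : ∀ a : ℝ, a ≤ 0 → F a = 0 := by
    intro a ha
    simp only [hFdef]
    rw [Ioc_eq_empty (not_lt.2 ha)]
    simp
  have hψx : ∀ x : ℝ, 0 < x → ψ x ^ p * ENNReal.ofReal x ≤ C := by
    intro x hx
    have h1 : ψ x ^ p * ENNReal.ofReal x = ∫⁻ _ in Ioc (0:ℝ) x, ψ x ^ p := by
      rw [setLIntegral_const, Real.volume_Ioc, sub_zero]
    rw [h1]
    refine le_trans (setLIntegral_mono' measurableSet_Ioc fun y hy => ?_)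
      (lintegral_mono_set Ioc_subset_Ioi_self)
    exact ENNReal.rpow_le_rpow (hmono hy.1 hx hy.2) hp0.le
  have hψlt : ∀ x : ℝ, 0 < x → ψ x ≤ (C / ENNReal.ofReal x) ^ (1/p) := by
    intro x hx
    have h2 : ψ x ^ p ≤ C / ENNReal.ofReal x := by
      rw [ENNReal.le_div_iff_mul_le (Or.inl (ofReal_pos.2 hx).ne') (Or.inl ofReal_ne_top)]
      exact hψx x hx
    calc ψ x = (ψ x ^ p) ^ (1/p) := by
          rw [← ENNReal.rpow_mul, mul_one_div_cancel hp0.ne', ENNReal.rpow_one]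
      _ ≤ _ := ENNReal.rpow_le_rpow h2 (by positivity)
  have hψfin : ∀ x : ℝ, 0 < x → ψ x ≠ ⊤ := by
    intro x hx
    refine ne_top_of_le_ne_top ?_ (hψlt x hx)
    exact ENNReal.rpow_ne_top_of_nonneg (by positivity)
      (ENNReal.div_lt_top hfin.ne (ofReal_pos.2 hx).ne').ne
  have hFfin : ∀ x : ℝ, 0 < x → F x ≠ ⊤ := by
    intro x hx
    have hb : F x ≤ C ^ (1/p) * ∫⁻ y in Ioc (0:ℝ) x, ENNReal.ofReal y ^ (-(1/p)) := by
      rw [← lintegral_const_mul' _ _ (ENNReal.rpow_ne_top_of_nonneg (by positivity) hfin.ne)]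
      simp only [hFdef]
      refine setLIntegral_mono' measurableSet_Ioc fun y hy => ?_
      calc ψ y ≤ (C / ENNReal.ofReal y) ^ (1/p) := hψlt y hy.1
        _ = C ^ (1/p) * ENNReal.ofReal y ^ (-(1/p)) := by
            rw [ENNReal.div_rpow_of_nonneg _ _ (by positivity), div_eq_mul_inv,
              ← ENNReal.rpow_neg]
    refine ne_top_of_le_ne_top ?_ hb
    refine ENNReal.mul_ne_top (ENNReal.rpow_ne_top_of_nonneg (by positivity) hfin.ne) ?_
    have h3 : ∫⁻ y in Ioc (0:ℝ) x, ENNReal.ofReal y ^ (-(1/p))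
        = ∫⁻ y in Ioo (0:ℝ) x, ENNReal.ofReal y ^ (-(1/p)) :=
      (setLIntegral_congr (Ioo_ae_eq_Ioc (a := (0:ℝ)) (b := x))).symm
    rw [h3, show -(1/p) = (1 - 1/p) - 1 by ring,
      auxRH_rpow_Ioo (1 - 1/p) (by
        have : 1/p < 1 := by rw [div_lt_one hp0]; linarith
        linarith) x hx.le]
    exact ofReal_ne_top
  have hFx : ∀ x : ℝ, 0 < x → ENNReal.ofReal x * ψ x ≤ F x := by
    intro x hx
    have h1 : ENNReal.ofReal x * ψ x = ∫⁻ _ in Ioc (0:ℝ) x, ψ x := by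
      rw [setLIntegral_const, Real.volume_Ioc, sub_zero, mul_comm]
    rw [h1]
    simp only [hFdef]
    exact setLIntegral_mono' measurableSet_Ioc fun y hy => hmono hy.1 hx hy.2
  -- the slice bound coming from right-continuity of F
  have hslice : ∀ x : ℝ, 0 < x → ∀ t : ℝ, 0 < t →
      ∫⁻ y in Ioc (0:ℝ) x, ψ y * (if ENNReal.ofReal t < F y then 1 else 0)
        ≤ F x - ENNReal.ofReal t := by
    intro x hx t ht
    by_cases htF : ENNReal.ofReal t < F x
    swap
    · -- F y ≤ F x ≤ ofReal t for all y ≤ x, integrand vanishes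
      push_neg at htF
      have : ∀ y ∈ Ioc (0:ℝ) x, ψ y * (if ENNReal.ofReal t < F y then 1 else 0) = 0 := by
        intro y hy
        rw [if_neg (not_lt.2 ((hFmono hy.2).trans htF)), mul_zero]
      rw [setLIntegral_congr_fun measurableSet_Ioc this]
      simp
    set S := {y : ℝ | ENNReal.ofReal t < F y} with hSdef
    have hxS : x ∈ S := htF
    have hSpos : ∀ y ∈ S, 0 < y := by
      intro y hy
      by_contra hc
      push_neg at hc
      rw [hSdef, mem_setOf_eq, hFneg y hc] at hy
      simp at hy
    have hSbdd : BddBelow S := ⟨0, fun y hy => (hSpos y hy).le⟩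
    set z := sInf S with hzdef
    have hz0 : 0 ≤ z := le_csInf ⟨x, hxS⟩ fun y hy => (hSpos y hy).le
    have hzx : z ≤ x := csInf_le hSbdd hxS
    have hFz : ENNReal.ofReal t ≤ F z := by
      have hseq : ∀ n : ℕ, ENNReal.ofReal t ≤ F (z + 1/(n+1)) := by
        intro n
        have h1 : z < z + 1/((n:ℝ)+1) := lt_add_of_pos_right _ (by positivity)
        obtain ⟨s, hsS, hs⟩ := exists_lt_of_csInf_lt ⟨x, hxS⟩ h1
        exact le_trans (le_of_lt hsS) (hFmono hs.le)
      have hiin : Ioc (0:ℝ) z = ⋂ n : ℕ, Ioc (0:ℝ) (z + 1/(n+1)) := by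
        ext y
        simp only [mem_Ioc, mem_iInter]
        constructor
        · rintro ⟨h1, h2⟩ n
          exact ⟨h1, h2.trans (le_add_of_nonneg_right (by positivity))⟩
        · intro h
          refine ⟨(h 0).1, ?_⟩
          by_contra hc
          push_neg at hc
          obtain ⟨n, hn⟩ := exists_nat_one_div_lt (sub_pos.2 hc)
          have h2 := (h n).2
          linarith
      have hmono2 : ∀ m n : ℕ, m ≤ n →
          Ioc (0:ℝ) (z + 1/(n+1)) ⊆ Ioc (0:ℝ) (z + 1/(m+1)) := by
        intro m n hmn
        apply Ioc_subset_Ioc_right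
        have hc : (m:ℝ) ≤ (n:ℝ) := Nat.cast_le.2 hmn
        have : (1:ℝ)/((n:ℝ)+1) ≤ 1/((m:ℝ)+1) := by
          apply one_div_le_one_div_of_le (by positivity)
          linarith
        linarith
      have hdir : Directed (· ⊇ ·) (fun n : ℕ => Ioc (0:ℝ) (z + 1/(n+1))) :=
        fun m n => ⟨max m n, hmono2 m (max m n) (le_max_left _ _),
          hmono2 n (max m n) (le_max_right _ _)⟩
      have hfin1 : ∃ n : ℕ, μ (Ioc (0:ℝ) (z + 1/((n:ℝ)+1))) ≠ ⊤ :=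
        ⟨0, by rw [← hFμ]; exact hFfin _ (by positivity)⟩
      have hmeasInter := Directed.measure_iInter (μ := μ)
        (s := fun n : ℕ => Ioc (0:ℝ) (z + 1/(n+1)))
        (fun n => measurableSet_Ioc.nullMeasurableSet) hdir hfin1
      have hFzi : F z = ⨅ n : ℕ, F (z + 1/(n+1)) := by
        rw [hFμ, hiin, hmeasInter]
        exact iInf_congr fun n => (hFμ _).symm
      rw [hFzi]
      exact le_iInf hseq
    have hFzfin : F z ≠ ⊤ := ne_top_of_le_ne_top (hFfin x hx) (hFmono hzx)
    have hpt : ∀ y ∈ Ioc (0:ℝ) x,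
        ψ y * (if ENNReal.ofReal t < F y then 1 else 0) ≤ (Icc z x).indicator ψ y := by
      intro y hy
      by_cases h : ENNReal.ofReal t < F y
      · rw [if_pos h, mul_one, indicator_of_mem (show y ∈ Icc z x from ⟨csInf_le hSbdd h, hy.2⟩)]
      · rw [if_neg h, mul_zero]; exact zero_le
    calc ∫⁻ y in Ioc (0:ℝ) x, ψ y * (if ENNReal.ofReal t < F y then 1 else 0)
        ≤ ∫⁻ y in Ioc (0:ℝ) x, (Icc z x).indicator ψ y :=
          setLIntegral_mono' measurableSet_Ioc hpt
      _ ≤ ∫⁻ y, (Icc z x).indicator ψ y := setLIntegral_le_lintegral _ _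
      _ = μ (Icc z x) := by
          rw [lintegral_indicator measurableSet_Icc, hμapp _ measurableSet_Icc]
      _ ≤ μ (Ioc z x) := by
          have hsub : Icc z x ⊆ Ioc z x ∪ {z} := by
            intro y hy
            rcases eq_or_lt_of_le hy.1 with h | h
            · exact Or.inr (by simp [← h])
            · exact Or.inl ⟨h, hy.2⟩
          calc μ (Icc z x) ≤ μ (Ioc z x ∪ {z}) := measure_mono hsub
            _ ≤ μ (Ioc z x) + μ {z} := measure_union_le _ _
            _ = μ (Ioc z x) := by rw [hμz, add_zero]
      _ = F x - F z := by
          have hsplit : F x = F z + μ (Ioc z x) := by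
            rw [hFμ x, hFμ z, ← measure_union (Set.Ioc_disjoint_Ioc_of_le le_rfl) measurableSet_Ioc,
              Ioc_union_Ioc_eq_Ioc hz0 hzx]
          rw [hsplit, ENNReal.add_sub_cancel_left hFzfin]
      _ ≤ F x - ENNReal.ofReal t := tsub_le_tsub_left hFz _
  -- key inequality
  have key : ∀ x : ℝ, 0 < x →
      ENNReal.ofReal p * ∫⁻ y in Ioc (0:ℝ) x, ψ y * F y ^ (p-1) ≤ F x ^ p := by
    intro x hx
    set T := (F x).toReal with hTdef
    have hFxt : F x = ENNReal.ofReal T := (ENNReal.ofReal_toReal (hFfin x hx)).symm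
    have hT0 : 0 ≤ T := ENNReal.toReal_nonneg
    set G : ℝ → ℝ → ℝ≥0∞ := fun y t =>
      ψ y * (ENNReal.ofReal t ^ (p-2) * (if ENNReal.ofReal t < F y then 1 else 0)) with hGdef
    have hGm : Measurable (Function.uncurry G) := by
      have h0 : Function.uncurry G = fun z : ℝ × ℝ =>
          ψ z.1 * (ENNReal.ofReal z.2 ^ (p-2) *
            (if ENNReal.ofReal z.2 < F z.1 then 1 else 0)) := rfl
      rw [h0]
      exact (hψ.comp measurable_fst).mul
        (((measurable_snd.ennreal_ofReal).pow_const _).mul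
          (Measurable.ite (measurableSet_lt measurable_snd.ennreal_ofReal
            (hFmeas.comp measurable_fst)) measurable_const measurable_const))
    have stepa : ∀ y ∈ Ioc (0:ℝ) x,
        ψ y * F y ^ (p-1) = ENNReal.ofReal (p-1) * ∫⁻ t in Ioo (0:ℝ) T, G y t := by
      intro y hy
      have hFy : F y ≠ ⊤ := hFfin y hy.1
      have hτT : (F y).toReal ≤ T := ENNReal.toReal_mono (hFfin x hx) (hFmono hy.2)
      have hinner : ∫⁻ t in Ioo (0:ℝ) T,
          ENNReal.ofReal t ^ (p-2) * (if ENNReal.ofReal t < F y then 1 else 0)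
          = ENNReal.ofReal ((F y).toReal ^ (p-1) / (p-1)) := by
        have heq : ∀ t ∈ Ioo (0:ℝ) T,
            ENNReal.ofReal t ^ (p-2) * (if ENNReal.ofReal t < F y then 1 else 0)
              = (Ioo (0:ℝ) (F y).toReal).indicator
                  (fun t => ENNReal.ofReal t ^ (p-2)) t := by
          intro t ht
          by_cases hlt : ENNReal.ofReal t < F y
          · rw [if_pos hlt, mul_one, indicator_of_mem (show t ∈ Ioo (0:ℝ) (F y).toReal from
              ⟨ht.1, (ENNReal.ofReal_lt_iff_lt_toReal ht.1.le hFy).1 hlt⟩)]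
          · rw [if_neg hlt, mul_zero, indicator_of_notMem]
            intro hmem
            exact hlt ((ENNReal.ofReal_lt_iff_lt_toReal ht.1.le hFy).2 hmem.2)
        rw [setLIntegral_congr_fun measurableSet_Ioo heq,
          lintegral_indicator measurableSet_Ioo, Measure.restrict_restrict measurableSet_Ioo,
          inter_eq_self_of_subset_left (Ioo_subset_Ioo_right hτT),
          show p - 2 = (p-1) - 1 by ring, auxRH_rpow_Ioo (p-1) (by linarith) _ toReal_nonneg]
      have hc1 : ENNReal.ofReal (p-1) * ENNReal.ofReal ((F y).toReal ^ (p-1) / (p-1))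
          = F y ^ (p-1) := by
        rw [← ENNReal.ofReal_mul (by linarith : (0:ℝ) ≤ p-1)]
        have h4 : (p-1) * ((F y).toReal ^ (p-1) / (p-1)) = (F y).toReal ^ (p-1) := by
          rw [mul_comm, div_mul_cancel₀ _ (show p - 1 ≠ 0 by linarith)]
        rw [h4, ← ENNReal.ofReal_rpow_of_nonneg toReal_nonneg (show (0:ℝ) ≤ p - 1 by linarith),
          ENNReal.ofReal_toReal hFy]
      simp only [hGdef]
      rw [lintegral_const_mul' (ψ y) _ (hψfin y hy.1), hinner, ← hc1]
      ring
    have hupp : ∀ t ∈ Ioo (0:ℝ) T, ∫⁻ y in Ioc (0:ℝ) x, G y t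
        ≤ ENNReal.ofReal t ^ (p-2) * (ENNReal.ofReal T - ENNReal.ofReal t) := by
      intro t ht
      have hw : ENNReal.ofReal t ^ (p-2) ≠ ⊤ :=
        auxRH_rpow_ne_top (ofReal_pos.2 ht.1).ne' ofReal_ne_top _
      have h1 : ∫⁻ y in Ioc (0:ℝ) x, G y t = ENNReal.ofReal t ^ (p-2) *
          ∫⁻ y in Ioc (0:ℝ) x, ψ y * (if ENNReal.ofReal t < F y then 1 else 0) := by
        rw [← lintegral_const_mul' _ _ hw]
        refine setLIntegral_congr_fun measurableSet_Ioc (fun y hy => ?_)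
        simp only [hGdef]
        ring
      rw [h1, ← hFxt]
      exact mul_le_mul_right (hslice x hx t ht.1) _
    have hkey2 : ∫⁻ y in Ioc (0:ℝ) x, ψ y * F y ^ (p-1) ≤ ENNReal.ofReal (T ^ p / p) := by
      calc ∫⁻ y in Ioc (0:ℝ) x, ψ y * F y ^ (p-1)
          = ENNReal.ofReal (p-1) * ∫⁻ y in Ioc (0:ℝ) x, ∫⁻ t in Ioo (0:ℝ) T, G y t := by
            rw [← lintegral_const_mul' _ _ ofReal_ne_top]
            exact setLIntegral_congr_fun measurableSet_Ioc stepa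
        _ = ENNReal.ofReal (p-1) * ∫⁻ t in Ioo (0:ℝ) T, ∫⁻ y in Ioc (0:ℝ) x, G y t := by
            rw [lintegral_lintegral_swap hGm.aemeasurable]
        _ ≤ ENNReal.ofReal (p-1) * ∫⁻ t in Ioo (0:ℝ) T,
              ENNReal.ofReal t ^ (p-2) * (ENNReal.ofReal T - ENNReal.ofReal t) :=
            mul_le_mul_right (setLIntegral_mono' measurableSet_Ioo hupp) _
        _ = ENNReal.ofReal (p-1) * ENNReal.ofReal (T ^ p / (p * (p-1))) := by
            rw [auxRH_tint p hp T hT0]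
        _ = ENNReal.ofReal (T ^ p / p) := by
            rw [← ENNReal.ofReal_mul (by linarith)]
            congr 1
            have hp1 : p - 1 ≠ 0 := by linarith
            have hpne : p ≠ 0 := by linarith
            field_simp
    calc ENNReal.ofReal p * ∫⁻ y in Ioc (0:ℝ) x, ψ y * F y ^ (p-1)
        ≤ ENNReal.ofReal p * ENNReal.ofReal (T ^ p / p) := mul_le_mul_right hkey2 _
      _ = ENNReal.ofReal (T ^ p) := by
          rw [← ENNReal.ofReal_mul hp0.le]
          congr 1
          field_simp
      _ = F x ^ p := by rw [hFxt, ENNReal.ofReal_rpow_of_nonneg hT0 hp0.le]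
  -- finiteness of the integrand pieces
  have hcfin : ∀ y : ℝ, 0 < y → ψ y * F y ^ (p-1) ≠ ⊤ := fun y hy =>
    ENNReal.mul_ne_top (hψfin y hy)
      (ENNReal.rpow_ne_top_of_nonneg (by linarith) (hFfin y hy))
  have hwfin : ∀ x : ℝ, 0 < x → ENNReal.ofReal x ^ (-p) ≠ ⊤ := fun x hx =>
    auxRH_rpow_ne_top (ofReal_pos.2 hx).ne' ofReal_ne_top _
  set J : ℝ → ℝ → ℝ≥0∞ := fun x y =>
    if 0 < y ∧ y ≤ x then ENNReal.ofReal x ^ (-p) * (ψ y * F y ^ (p-1)) else 0 with hJdef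
  have hJm : AEMeasurable (Function.uncurry J)
      ((volume.restrict (Ioi (0:ℝ))).prod volume) := by
    have h0 : Function.uncurry J = fun z : ℝ × ℝ =>
        if 0 < z.2 ∧ z.2 ≤ z.1 then ENNReal.ofReal z.1 ^ (-p) * (ψ z.2 * F z.2 ^ (p-1))
        else 0 := rfl
    rw [h0]
    refine Measurable.aemeasurable (Measurable.ite ?_ ?_ measurable_const)
    · exact ((measurableSet_lt measurable_const measurable_snd).inter
        (measurableSet_le measurable_snd measurable_fst))
    · exact ((measurable_fst.ennreal_ofReal).pow_const _).mul
        ((hψ.comp measurable_snd).mul ((hFmeas.comp measurable_snd).pow_const _))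
  calc ENNReal.ofReal (p/(p-1)) * C
      = ∫⁻ y in Ioi (0:ℝ), ENNReal.ofReal (p/(p-1)) * ψ y ^ p := by
        rw [lintegral_const_mul' _ _ ofReal_ne_top, hCdef]
    _ ≤ ∫⁻ y in Ioi (0:ℝ), ENNReal.ofReal p *
          ((ψ y * F y ^ (p-1)) * ENNReal.ofReal (y ^ (1-p) / (p-1))) := by
        refine setLIntegral_mono' measurableSet_Ioi fun y hy => ?_
        have hy0 : (0:ℝ) < y := hy
        have e1 : ψ y ^ p = ψ y ^ (p-1) * ψ y := by
          rw [show p = (p-1) + 1 by ring, ENNReal.rpow_add_of_nonneg _ _ (by linarith)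
            zero_le_one, ENNReal.rpow_one, show p - 1 + 1 - 1 = p - 1 by ring]
        have e2 : ENNReal.ofReal y ^ (p-1) * ENNReal.ofReal (y ^ (1-p) / (p-1))
            = ENNReal.ofReal (1/(p-1)) := by
          rw [ENNReal.ofReal_rpow_of_nonneg hy0.le (show (0:ℝ) ≤ p - 1 by linarith),
            ← ENNReal.ofReal_mul (Real.rpow_nonneg hy0.le _)]
          congr 1
          rw [← mul_div_assoc, ← Real.rpow_add hy0, show p-1+(1-p) = 0 by ring,
            Real.rpow_zero]
        have e3 : ENNReal.ofReal (p/(p-1)) = ENNReal.ofReal p * ENNReal.ofReal (1/(p-1)) := by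
          rw [← ENNReal.ofReal_mul hp0.le, mul_one_div]
        have h2 : ENNReal.ofReal y ^ (p-1) * ψ y ^ (p-1) ≤ F y ^ (p-1) := by
          rw [← ENNReal.mul_rpow_of_nonneg _ _ (by linarith)]
          exact ENNReal.rpow_le_rpow (hFx y hy0) (by linarith)
        calc ENNReal.ofReal (p/(p-1)) * ψ y ^ p
            = ENNReal.ofReal p * ((ENNReal.ofReal y ^ (p-1) * ψ y ^ (p-1)) *
                (ψ y * ENNReal.ofReal (y ^ (1-p) / (p-1)))) := by
              rw [e3, e1, ← e2]; ring
          _ ≤ ENNReal.ofReal p * (F y ^ (p-1) *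
                (ψ y * ENNReal.ofReal (y ^ (1-p) / (p-1)))) :=
              mul_le_mul_right (mul_le_mul_left h2 _) _
          _ = ENNReal.ofReal p * ((ψ y * F y ^ (p-1)) *
                ENNReal.ofReal (y ^ (1-p) / (p-1))) := by ring
    _ = ENNReal.ofReal p * ∫⁻ y in Ioi (0:ℝ),
          (ψ y * F y ^ (p-1)) * ENNReal.ofReal (y ^ (1-p) / (p-1)) :=
        lintegral_const_mul' _ _ ofReal_ne_top
    _ = ENNReal.ofReal p * ∫⁻ y in Ioi (0:ℝ), ∫⁻ x in Ioi (0:ℝ), J x y := by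
        congr 1
        refine (setLIntegral_congr_fun measurableSet_Ioi (fun y hy => ?_)).symm
        have hy0 : (0:ℝ) < y := hy
        have h1 : ∀ x : ℝ, J x y = (Ici y).indicator
            (fun x => ENNReal.ofReal x ^ (-p) * (ψ y * F y ^ (p-1))) x := by
          intro x
          by_cases h : y ≤ x
          · simp only [hJdef]
            rw [if_pos ⟨hy0, h⟩, indicator_of_mem (mem_Ici.2 h)]
          · simp only [hJdef]
            rw [if_neg (fun hc => h hc.2), indicator_of_notMem (fun hc => h (mem_Ici.1 hc))]
        have h2 : Ici y ∩ Ioi (0:ℝ) = Ici y :=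
          inter_eq_self_of_subset_left (fun a ha => lt_of_lt_of_le hy0 ha)
        rw [lintegral_congr h1, lintegral_indicator measurableSet_Ici,
          Measure.restrict_restrict measurableSet_Ici, h2,
          lintegral_mul_const' _ _ (hcfin y hy0),
          setLIntegral_congr (Ioi_ae_eq_Ici (a := y)).symm, auxRH_rpow_Ioi p hp y hy0]
        ring
    _ ≤ ENNReal.ofReal p * ∫⁻ y, ∫⁻ x in Ioi (0:ℝ), J x y :=
        mul_le_mul_right (setLIntegral_le_lintegral _ _) _
    _ = ENNReal.ofReal p * ∫⁻ x in Ioi (0:ℝ), ∫⁻ y, J x y := by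
        rw [← lintegral_lintegral_swap hJm]
    _ = ∫⁻ x in Ioi (0:ℝ), ENNReal.ofReal p *
          (ENNReal.ofReal x ^ (-p) * ∫⁻ y in Ioc (0:ℝ) x, ψ y * F y ^ (p-1)) := by
        rw [← lintegral_const_mul' _ _ ofReal_ne_top]
        refine setLIntegral_congr_fun measurableSet_Ioi (fun x hx => ?_)
        have hx0 : (0:ℝ) < x := hx
        have h1 : ∀ y : ℝ, J x y = (Ioc (0:ℝ) x).indicator
            (fun y => ENNReal.ofReal x ^ (-p) * (ψ y * F y ^ (p-1))) y := by
          intro y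
          by_cases h : 0 < y ∧ y ≤ x
          · simp only [hJdef]
            rw [if_pos h, indicator_of_mem (mem_Ioc.2 h)]
          · simp only [hJdef]
            rw [if_neg h, indicator_of_notMem (fun hc => h (mem_Ioc.1 hc))]
        rw [lintegral_congr h1, lintegral_indicator measurableSet_Ioc,
          lintegral_const_mul' _ _ (hwfin x hx0)]
    _ ≤ ∫⁻ x in Ioi (0:ℝ), (F x / ENNReal.ofReal x) ^ p := by
        refine setLIntegral_mono' measurableSet_Ioi fun x hx => ?_
        have hx0 : (0:ℝ) < x := hx
        rw [ENNReal.div_rpow_of_nonneg _ _ hp0.le, ENNReal.div_eq_inv_mul,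
          ← ENNReal.rpow_neg]
        calc ENNReal.ofReal p * (ENNReal.ofReal x ^ (-p) *
              ∫⁻ y in Ioc (0:ℝ) x, ψ y * F y ^ (p-1))
            = ENNReal.ofReal x ^ (-p) *
              (ENNReal.ofReal p * ∫⁻ y in Ioc (0:ℝ) x, ψ y * F y ^ (p-1)) := by ring
          _ ≤ ENNReal.ofReal x ^ (-p) * F x ^ p := mul_le_mul_right (key x hx0) _
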